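/- Let p be an odd integer, d a positive integer with gcd(d,p)=1, and f(x) = Σ_{i=0}^{p-1} f_i x^i ∈ F_2[x]/(1+x^p) with f(1)=0. Define g(x) by g_{p-1}=0, g_{p-d-1 mod p}=f_{p-1}, g_{d-1}=f_{d-1}, and g_{(p-(i+1)d-1) mod p} = f_{(p-id-1) mod p} + g_{(p-id-1) mod p} for i=1,...,p-3. Then (1+x^d)g(x) = f(x) in F_2[x]/(1+x^p). -/

import Mathlib

open Polynomial

lemma zmod2_self_add (a : ZMod 2) : a + a = 0 := by revert a; decide

lemma zmod2_abab (a b : ZMod 2) : a + (b + a) + b = 0 := by revert a b; decide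

lemma zmod2_eq_of_add (a b : ZMod 2) (h : a + b = 0) : a = b := by revert a b; decide

lemma sum_sigma_reindex {M : Type*} [AddCommMonoid M] (p d : ℕ) (hp0 : 0 < p)
    (hgcd : Nat.gcd d p = 1) (F : ℕ → M) :
    ∑ i ∈ Finset.range p, F (p - 1 - i * d % p) = ∑ i ∈ Finset.range p, F i := by
  haveI : NeZero p := ⟨by omega⟩
  have hinj : ∀ i < p, ∀ j < p, i * d % p = j * d % p → i = j := by
    intro i hi j hj hij
    have hu : IsUnit (d : ZMod p) := (ZMod.isUnit_iff_coprime d p).mpr hgcd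
    have h1 : ((i : ZMod p)) * d = (j : ZMod p) * d := by
      have := congrArg (Nat.cast : ℕ → ZMod p) hij
      rwa [ZMod.natCast_mod, ZMod.natCast_mod, Nat.cast_mul, Nat.cast_mul] at this
    have h2 : (i : ZMod p) = j := hu.mul_right_cancel h1
    have := congrArg ZMod.val h2
    rwa [ZMod.val_cast_of_lt hi, ZMod.val_cast_of_lt hj] at this
  have hmem : ∀ i ∈ Finset.range p, p - 1 - i * d % p ∈ Finset.range p := by
    intro i _
    simp only [Finset.mem_range]
    omega
  have hinj' : ∀ (a₁ : ℕ) (ha₁ : a₁ ∈ Finset.range p) (a₂ : ℕ) (ha₂ : a₂ ∈ Finset.range p),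
      p - 1 - a₁ * d % p = p - 1 - a₂ * d % p → a₁ = a₂ := by
    intro a₁ h1 a₂ h2 h
    simp only [Finset.mem_range] at h1 h2
    have hm1 : a₁ * d % p < p := Nat.mod_lt _ hp0
    have hm2 : a₂ * d % p < p := Nat.mod_lt _ hp0
    exact hinj a₁ h1 a₂ h2 (by omega)
  have hsurj := Finset.surj_on_of_inj_on_of_card_le
    (fun i _ => p - 1 - i * d % p) hmem (fun a₁ a₂ h1 h2 h => hinj' a₁ h1 a₂ h2 h)
    (le_refl (Finset.range p).card)
  exact Finset.sum_bij (fun i _ => p - 1 - i * d % p) hmem hinj'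
    (fun b hb => by obtain ⟨a, ha, hab⟩ := hsurj b hb; exact ⟨a, ha, hab.symm⟩)
    (fun a _ => rfl)

theorem division_by_one_add_Xd_fast (p d : ℕ) (hp : Odd p) (hd : 0 < d)
    (hgcd : Nat.gcd d p = 1) (f g : ℕ → ZMod 2)
    (hf : ∑ i ∈ Finset.range p, f i = 0)
    (hg1 : g (p - 1) = 0)
    (hg2 : g (p - 1 - d % p) = f (p - 1))
    (hg3 : g ((d - 1) % p) = f ((d - 1) % p))
    (hgrec : ∀ i : ℕ, 1 ≤ i → i ≤ p - 3 →
      g (p - 1 - ((i + 1) * d) % p) = f (p - 1 - (i * d) % p) + g (p - 1 - (i * d) % p)) :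
    Ideal.Quotient.mk (Ideal.span ({1 + X ^ p} : Set (Polynomial (ZMod 2))))
        ((1 + X ^ d) * ∑ i ∈ Finset.range p, C (g i) * X ^ i)
      = Ideal.Quotient.mk (Ideal.span ({1 + X ^ p} : Set (Polynomial (ZMod 2))))
        (∑ i ∈ Finset.range p, C (f i) * X ^ i) := by
  rcases Nat.lt_or_ge p 3 with h3 | h3
  · -- degenerate case p = 1
    have hp1 : p = 1 := by rcases hp with ⟨k, hk⟩; omega
    subst hp1
    simp only [Finset.sum_range_one] at hf ⊢
    norm_num at hg1
    simp [hg1, hf]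
  · -- main case p ≥ 3
    obtain ⟨m, rfl⟩ : ∃ m, p = m + 1 := ⟨p - 1, by omega⟩
    have hm2 : 2 ≤ m := by omega
    have hp0 : 0 < m + 1 := by omega
    simp only [Nat.add_sub_cancel] at hg1 hg2 hg3 hgrec
    set q : Polynomial (ZMod 2) →+*
        (Polynomial (ZMod 2) ⧸ Ideal.span ({1 + X ^ (m + 1)} : Set (Polynomial (ZMod 2)))) :=
      Ideal.Quotient.mk (Ideal.span ({1 + X ^ (m + 1)} : Set (Polynomial (ZMod 2)))) with hqdef
    -- y^(m+1) = 1
    have h0 : q (1 + X ^ (m + 1)) = 0 :=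
      Ideal.Quotient.eq_zero_iff_mem.mpr (Ideal.subset_span rfl)
    simp only [map_add, map_one, map_pow] at h0
    have h11 : (1 + 1 : Polynomial (ZMod 2)) = 0 := by
      rw [← C_1, ← C_add, show (1 + 1 : ZMod 2) = 0 from rfl, C_0]
    have h2 : (1 : Polynomial (ZMod 2) ⧸
        Ideal.span ({1 + X ^ (m + 1)} : Set (Polynomial (ZMod 2)))) + 1 = 0 := by
      rw [← map_one q, ← map_add, h11, map_zero]
    have hyp1 : (q X) ^ (m + 1) = 1 := by linear_combination h0 - h2
    have hyeq : ∀ a b : ℕ, a % (m + 1) = b % (m + 1) → (q X) ^ a = (q X) ^ b := by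
      have key : ∀ a : ℕ, (q X) ^ a = (q X) ^ (a % (m + 1)) := fun a =>
        pow_eq_pow_mod a hyp1
      intro a b h
      rw [key a, key b, h]
    -- mod-step lemma
    have hkey : ∀ i : ℕ,
        (m - (i + 1) * d % (m + 1) + d) % (m + 1) = (m - i * d % (m + 1)) % (m + 1) := by
      intro i
      have ha : (i + 1) * d % (m + 1) < m + 1 := Nat.mod_lt _ hp0
      have hb : i * d % (m + 1) < m + 1 := Nat.mod_lt _ hp0
      have hab : Nat.ModEq (m + 1) (i * d % (m + 1) + d) ((i + 1) * d % (m + 1)) := by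
        show _ % _ = _ % _
        rw [Nat.mod_add_mod, show i * d + d = (i + 1) * d by ring, Nat.mod_eq_of_lt ha]
      have h2' : (m - (i + 1) * d % (m + 1) + d) + ((i + 1) * d % (m + 1) + i * d % (m + 1))
          ≡ (m - i * d % (m + 1)) + ((i + 1) * d % (m + 1) + i * d % (m + 1)) [MOD (m + 1)] := by
        have e1 : (m - (i + 1) * d % (m + 1) + d) + ((i + 1) * d % (m + 1) + i * d % (m + 1))
            = m + (i * d % (m + 1) + d) := by omega
        have e2 : (m - i * d % (m + 1)) + ((i + 1) * d % (m + 1) + i * d % (m + 1))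
            = m + (i + 1) * d % (m + 1) := by omega
        rw [e1, e2]
        exact (Nat.ModEq.refl m).add hab
      exact Nat.ModEq.add_right_cancel (Nat.ModEq.refl _) h2'
    -- d % (m+1) ≥ 1
    have hdmod : 1 ≤ d % (m + 1) := by
      rcases Nat.eq_zero_or_pos (d % (m + 1)) with h | h
      · exfalso
        have hdvd : (m + 1) ∣ d := Nat.dvd_of_mod_eq_zero h
        have := Nat.le_of_dvd one_pos (hgcd ▸ Nat.dvd_gcd hdvd (dvd_refl (m + 1)))
        omega
      · exact h
    have hdmod' : d % (m + 1) < m + 1 := Nat.mod_lt _ hp0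
    -- key index computations for i = m
    have hmd : (m * d) % (m + 1) = (m + 1) - d % (m + 1) := by
      have h1 : (m * d + d) % (m + 1) = 0 := by
        rw [show m * d + d = (m + 1) * d by ring, Nat.mul_mod_right]
      have h2' : ((m + 1 - d % (m + 1)) + d) % (m + 1) = 0 := by
        have hdd := Nat.mod_add_div d (m + 1)
        rw [show (m + 1 - d % (m + 1)) + d = (m + 1) + (m + 1) * (d / (m + 1)) by omega,
          Nat.add_mul_mod_self_left, Nat.mod_self]
      have h3' : Nat.ModEq (m + 1) (m * d) (m + 1 - d % (m + 1)) :=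
        Nat.ModEq.add_right_cancel' d (h1.trans h2'.symm)
      have h4 : (m * d) % (m + 1) = (m + 1 - d % (m + 1)) % (m + 1) := h3'
      rwa [Nat.mod_eq_of_lt (show m + 1 - d % (m + 1) < m + 1 by omega)] at h4
    have hd1 : (d - 1) % (m + 1) = d % (m + 1) - 1 := by
      have hdd := Nat.mod_add_div d (m + 1)
      rw [show d - 1 = (d % (m + 1) - 1) + (m + 1) * (d / (m + 1)) by omega,
        Nat.add_mul_mod_self_left, Nat.mod_eq_of_lt (by omega)]
    -- the coefficient identities except at i = m - 1
    have hc0 : ∀ i, i ≤ m → i ≠ m - 1 →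
        g (m - i * d % (m + 1)) + g (m - (i + 1) * d % (m + 1)) + f (m - i * d % (m + 1)) = 0 := by
      intro i him hine
      by_cases hi0 : i = 0
      · subst hi0
        simp only [Nat.zero_mul, Nat.zero_mod, Nat.sub_zero, Nat.zero_add, one_mul]
        rw [hg1, hg2, zero_add]
        exact zmod2_self_add _
      · by_cases him' : i = m
        · rw [him']
          rw [show m - m * d % (m + 1) = (d - 1) % (m + 1) by rw [hmd, hd1]; omega,
            show (m + 1) * d % (m + 1) = 0 from Nat.mul_mod_right _ _, Nat.sub_zero,
            hg1, add_zero, hg3]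
          exact zmod2_self_add _
        · have h1 : 1 ≤ i := by omega
          have h2' : i ≤ m + 1 - 3 := by omega
          rw [hgrec i h1 h2']
          exact zmod2_abab _ _
    -- sum of all coefficient expressions is zero
    have hsum0 : ∑ i ∈ Finset.range (m + 1),
        (g (m - i * d % (m + 1)) + g (m - (i + 1) * d % (m + 1)) + f (m - i * d % (m + 1)))
        = 0 := by
      rw [Finset.sum_add_distrib, Finset.sum_add_distrib]
      have hfs : ∑ i ∈ Finset.range (m + 1), f (m - i * d % (m + 1)) = 0 := by
        have := sum_sigma_reindex (m + 1) d hp0 hgcd f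
        simp only [Nat.add_sub_cancel] at this
        exact this.trans hf
      have hgs : ∑ i ∈ Finset.range (m + 1), g (m - (i + 1) * d % (m + 1))
          = ∑ i ∈ Finset.range (m + 1), g (m - i * d % (m + 1)) := by
        rw [Finset.sum_range_succ (fun i => g (m - (i + 1) * d % (m + 1))) m,
          Finset.sum_range_succ' (fun i => g (m - i * d % (m + 1))) m]
        congr 1
        simp [Nat.mul_mod_right]
      rw [hgs, hfs, add_zero, zmod2_self_add]
    -- deduce the missing case, then all cases
    have hcm1 : g (m - (m - 1) * d % (m + 1)) + g (m - ((m - 1) + 1) * d % (m + 1))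
        + f (m - (m - 1) * d % (m + 1)) = 0 := by
      have hmem : m - 1 ∈ Finset.range (m + 1) := by simp
      have hsplit := Finset.add_sum_erase (Finset.range (m + 1))
        (fun i => g (m - i * d % (m + 1)) + g (m - (i + 1) * d % (m + 1))
          + f (m - i * d % (m + 1))) hmem
      have hz : ∑ i ∈ (Finset.range (m + 1)).erase (m - 1),
          (g (m - i * d % (m + 1)) + g (m - (i + 1) * d % (m + 1))
            + f (m - i * d % (m + 1))) = 0 := by
        apply Finset.sum_eq_zero
        intro i hi
        simp only [Finset.mem_erase, Finset.mem_range] at hi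
        exact hc0 i (by omega) hi.1
      rw [hsum0, hz, add_zero] at hsplit
      exact hsplit
    have hc : ∀ i, i ≤ m →
        g (m - i * d % (m + 1)) + g (m - (i + 1) * d % (m + 1)) = f (m - i * d % (m + 1)) := by
      intro i hi
      by_cases him : i = m - 1
      · subst him
        exact zmod2_eq_of_add _ _ hcm1
      · exact zmod2_eq_of_add _ _ (hc0 i hi him)
    -- now the ring computation
    simp only [map_mul, map_add, map_sum, map_pow, map_one]
    have hgre := sum_sigma_reindex (m + 1) d hp0 hgcd (fun j => q (C (g j)) * (q X) ^ j)
    have hfre := sum_sigma_reindex (m + 1) d hp0 hgcd (fun j => q (C (f j)) * (q X) ^ j)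
    simp only [Nat.add_sub_cancel] at hgre hfre
    rw [← hgre, ← hfre, add_mul, one_mul, Finset.mul_sum]
    have hshift : ∑ i ∈ Finset.range (m + 1),
        (q X) ^ d * (q (C (g (m - i * d % (m + 1)))) * (q X) ^ (m - i * d % (m + 1)))
        = ∑ i ∈ Finset.range (m + 1),
          q (C (g (m - (i + 1) * d % (m + 1)))) * (q X) ^ (m - i * d % (m + 1)) := by
      rw [Finset.sum_range_succ'
          (fun i => (q X) ^ d * (q (C (g (m - i * d % (m + 1)))) * (q X) ^ (m - i * d % (m + 1)))) m,
        Finset.sum_range_succ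
          (fun i => q (C (g (m - (i + 1) * d % (m + 1)))) * (q X) ^ (m - i * d % (m + 1))) m]
      congr 1
      · apply Finset.sum_congr rfl
        intro i _
        rw [mul_left_comm, ← pow_add]
        congr 1
        exact hyeq _ _ (by rw [Nat.add_comm]; exact hkey i)
      · rw [mul_left_comm, ← pow_add]
        rw [show m - 0 * d % (m + 1) = m by simp,
          show m - (m + 1) * d % (m + 1) = m by simp [Nat.mul_mod_right]]
        congr 1
        have := hkey m
        rw [show m - (m + 1) * d % (m + 1) = m by simp [Nat.mul_mod_right]] at this
        exact hyeq _ _ (by rw [Nat.add_comm]; exact this)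
    rw [hshift, ← Finset.sum_add_distrib]
    apply Finset.sum_congr rfl
    intro i hi
    rw [← add_mul, ← map_add, ← C_add, hc i (by simp only [Finset.mem_range] at hi; omega)]
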